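/- For any t ∈ ℝ and d ≥ 2, the matrix C₅ₜ(d) = I_{d-2} ⊕ [[(1-t³)^{1/3}, 0],[t, 0]] is a critical point of the Frobenius loss φ(W) = ∑_{i,j} ⟨wᵢ,wⱼ⟩³ − 2∑_{i,j} ⟨wᵢ,eⱼ⟩³ + d, i.e., ∇φ(C₅ₜ(d)) = 0. -/

import Mathlib

/-- Real cube root. -/
noncomputable def cbrt (x : ℝ) : ℝ :=
  if 0 ≤ x then x ^ ((1:ℝ)/3) else -((-x) ^ ((1:ℝ)/3))

/-- Frobenius loss `φ(W) = ∑_{i,j} ⟨wᵢ,wⱼ⟩³ − 2∑_{i,j} ⟨wᵢ,eⱼ⟩³ + d`. -/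
noncomputable def phi (d : ℕ) (W : Fin d → Fin d → ℝ) : ℝ :=
  (∑ i, ∑ j, (∑ k, W i k * W j k) ^ 3) - 2 * ∑ i, ∑ j, (W i j) ^ 3 + d

/-- The matrix `C₅ₜ(d) = I_{d-2} ⊕ [[(1-t³)^{1/3}, 0],[t, 0]]`. -/
noncomputable def C5 (d : ℕ) (t : ℝ) : Fin d → Fin d → ℝ := fun i j =>
  if (i : ℕ) < d - 2 then (if i = j then 1 else 0)
  else if (i : ℕ) = d - 2 then (if (j : ℕ) = d - 2 then cbrt (1 - t ^ 3) else 0)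
  else (if (j : ℕ) = d - 2 then t else 0)

lemma cbrt_cube (x : ℝ) : cbrt x ^ 3 = x := by
  unfold cbrt
  split_ifs with h
  · rw [← Real.rpow_natCast (x ^ ((1:ℝ)/3)) 3, ← Real.rpow_mul h]
    norm_num
  · have h' : (0:ℝ) ≤ -x := by linarith
    rw [Odd.neg_pow ⟨1, by norm_num⟩, ← Real.rpow_natCast ((-x) ^ ((1:ℝ)/3)) 3,
      ← Real.rpow_mul h']
    norm_num

noncomputable def rr (d : ℕ) (t : ℝ) (i : Fin d) : ℝ :=
  if (i:ℕ) < d - 2 then 1 else if (i:ℕ) = d - 2 then cbrt (1 - t^3) else t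

def qq (d : ℕ) (i : Fin d) : Fin d :=
  ⟨min (i:ℕ) (d-2), lt_of_le_of_lt (min_le_left _ _) i.isLt⟩

lemma C5_eq (d : ℕ) (t : ℝ) (i k : Fin d) :
    C5 d t i k = if k = qq d i then rr d t i else 0 := by
  have hq : (k = qq d i) ↔ (k : ℕ) = min (i:ℕ) (d-2) := by
    rw [Fin.ext_iff]; rfl
  rcases Nat.lt_trichotomy (i:ℕ) (d-2) with h | h | h
  · have hC : C5 d t i k = if i = k then 1 else 0 := by
      simp only [C5]; rw [if_pos h]
    have hr : rr d t i = 1 := by simp only [rr]; rw [if_pos h]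
    rw [hC, hr]
    have h2 : (k = qq d i) ↔ (i = k) := by
      rw [hq, Nat.min_eq_left (le_of_lt h), Fin.ext_iff]; exact eq_comm
    by_cases hik : i = k
    · rw [if_pos hik, if_pos (h2.2 hik)]
    · rw [if_neg hik, if_neg (fun hh => hik (h2.1 hh))]
  · have hC : C5 d t i k = if (k:ℕ) = d-2 then cbrt (1 - t^3) else 0 := by
      simp only [C5]; rw [if_neg (by omega), if_pos h]
    have hr : rr d t i = cbrt (1 - t^3) := by
      simp only [rr]; rw [if_neg (by omega), if_pos h]
    rw [hC, hr]
    have h2 : (k = qq d i) ↔ ((k:ℕ) = d - 2) := by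
      rw [hq, Nat.min_eq_right (by omega)]
    by_cases hk : (k:ℕ) = d-2
    · rw [if_pos hk, if_pos (h2.2 hk)]
    · rw [if_neg hk, if_neg (fun hh => hk (h2.1 hh))]
  · have hC : C5 d t i k = if (k:ℕ) = d-2 then t else 0 := by
      simp only [C5]; rw [if_neg (by omega), if_neg (by omega)]
    have hr : rr d t i = t := by
      simp only [rr]; rw [if_neg (by omega), if_neg (by omega)]
    rw [hC, hr]
    have h2 : (k = qq d i) ↔ ((k:ℕ) = d - 2) := by
      rw [hq, Nat.min_eq_right (by omega)]
    by_cases hk : (k:ℕ) = d-2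
    · rw [if_pos hk, if_pos (h2.2 hk)]
    · rw [if_neg hk, if_neg (fun hh => hk (h2.1 hh))]

lemma S_eq (d : ℕ) (t : ℝ) (i j : Fin d) :
    ∑ k, C5 d t i k * C5 d t j k =
    if qq d i = qq d j then rr d t i * rr d t j else 0 := by
  simp only [C5_eq]
  rw [Finset.sum_eq_single (qq d i)]
  · rw [if_pos rfl]
    by_cases h : qq d i = qq d j
    · rw [if_pos h, if_pos h]
    · rw [if_neg h, if_neg h, mul_zero]
  · intro b _ hb
    rw [if_neg hb, zero_mul]
  · intro hb; exact absurd (Finset.mem_univ _) hb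

lemma cube_sum (d : ℕ) (hd : 2 ≤ d) (t : ℝ) (k : Fin d) :
    ∑ j, (if qq d j = k then (rr d t j)^3 else 0) = if (k:ℕ) ≤ d - 2 then 1 else 0 := by
  have hqv : ∀ j : Fin d, ((qq d j : ℕ)) = min (j:ℕ) (d-2) := fun j => rfl
  rcases Nat.lt_trichotomy (k:ℕ) (d-2) with h | h | h
  · rw [if_pos (le_of_lt h), Finset.sum_eq_single k]
    · have h1 : qq d k = k := by ext; rw [hqv]; omega
      have h2 : rr d t k = 1 := by simp only [rr]; rw [if_pos h]
      rw [if_pos h1, h2, one_pow]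
    · intro b _ hb
      rw [if_neg]
      intro hc
      apply hb; ext
      have := congrArg (Fin.val) hc
      rw [hqv] at this
      omega
    · intro hb; exact absurd (Finset.mem_univ _) hb
  · rw [if_pos (le_of_eq h)]
    set a : Fin d := ⟨d-2, by omega⟩ with ha
    set b : Fin d := ⟨d-1, by omega⟩ with hbb
    have hab : a ≠ b := by rw [Fin.ne_iff_vne]; simp [ha, hbb]; omega
    have hz : ∀ j ∈ (Finset.univ : Finset (Fin d)), j ∉ ({a, b} : Finset (Fin d)) →
        (if qq d j = k then (rr d t j)^3 else 0) = 0 := by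
      intro j _ hj
      rw [Finset.mem_insert, Finset.mem_singleton] at hj
      push_neg at hj
      rw [if_neg]
      intro hc
      have := congrArg (Fin.val) hc
      rw [hqv] at this
      have hj1 := hj.1; have hj2 := hj.2
      rw [Fin.ne_iff_vne] at hj1 hj2
      simp only [ha, hbb] at hj1 hj2
      have : min (j:ℕ) (d-2) = d - 2 := by omega
      have hjlt := j.isLt
      omega
    rw [← Finset.sum_subset (Finset.subset_univ ({a,b} : Finset (Fin d))) hz,
      Finset.sum_pair hab]
    have hqa : qq d a = k := by ext; rw [hqv]; simp [ha]; omega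
    have hqb : qq d b = k := by ext; rw [hqv]; simp [hbb]; omega
    have hra : rr d t a = cbrt (1 - t^3) := by
      simp [rr, ha]
    have hrb : rr d t b = t := by
      simp only [rr]; rw [if_neg (by rw [hbb]; simp only [Fin.val_mk]; omega), if_neg (by rw [hbb]; simp only [Fin.val_mk]; omega)]
    rw [if_pos hqa, if_pos hqb, hra, hrb, cbrt_cube]
    ring
  · rw [if_neg (by omega), Finset.sum_eq_zero]
    intro j _
    rw [if_neg]
    intro hc
    have := congrArg (Fin.val) hc
    rw [hqv] at this
    omega

lemma key (d : ℕ) (hd : 2 ≤ d) (t : ℝ) (i k : Fin d) :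
    ∑ j, (∑ m, C5 d t i m * C5 d t j m)^2 * C5 d t j k = (C5 d t i k)^2 := by
  have step : ∀ j : Fin d,
      (∑ m, C5 d t i m * C5 d t j m)^2 * C5 d t j k
      = (if k = qq d i then (rr d t i)^2 else 0) * (if qq d j = k then (rr d t j)^3 else 0) := by
    intro j
    rw [S_eq, C5_eq]
    by_cases h1 : qq d i = qq d j
    · by_cases h2 : k = qq d j
      · rw [if_pos h1, if_pos h2, if_pos (h2.symm ▸ h1.symm ▸ rfl : k = qq d i),
          if_pos (h2.symm : qq d j = k)]
        ring
      · rw [if_pos h1, if_neg h2, if_neg (fun hh : qq d j = k => h2 hh.symm), mul_zero, mul_zero]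
    · by_cases h2 : k = qq d j
      · rw [if_neg h1, if_pos h2, if_neg (fun hh : k = qq d i => h1 (hh ▸ h2 ▸ rfl : qq d i = qq d j))]
        · ring
      · rw [if_neg h1, if_neg h2, if_neg (fun hh : qq d j = k => h2 hh.symm), mul_zero, mul_zero]
  rw [Finset.sum_congr rfl (fun j _ => step j), ← Finset.mul_sum, cube_sum d hd t k, C5_eq]
  by_cases hk : k = qq d i
  · have hle : (k:ℕ) ≤ d - 2 := by
      have : (k:ℕ) = min (i:ℕ) (d-2) := by rw [hk]; rfl
      omega
    rw [if_pos hk, if_pos hk, if_pos hle, mul_one]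
  · rw [if_neg hk, if_neg hk, zero_mul]
    ring

theorem stmt1 (d : ℕ) (hd : 2 ≤ d) (t : ℝ) : fderiv ℝ (phi d) (C5 d t) = 0 := by
  classical
  set W : Fin d → Fin d → ℝ := C5 d t with hWdef
  let L : Fin d → Fin d → ((Fin d → Fin d → ℝ) →L[ℝ] ℝ) := fun i k =>
    (ContinuousLinearMap.proj (R := ℝ) (φ := fun _ : Fin d => ℝ) k).comp (ContinuousLinearMap.proj (R := ℝ) (φ := fun _ : Fin d => Fin d → ℝ) i)
  have hL : ∀ i k, HasFDerivAt (fun W : Fin d → Fin d → ℝ => W i k) (L i k) W :=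
    fun i k => (L i k).hasFDerivAt
  have hS : ∀ i j, HasFDerivAt (fun W : Fin d → Fin d → ℝ => ∑ m, W i m * W j m)
      (∑ m, (W i m • L j m + W j m • L i m)) W :=
    fun i j => HasFDerivAt.fun_sum (fun m _ => (hL i m).mul (hL j m))
  have hcube : ∀ i j : Fin d, HasFDerivAt (fun W : Fin d → Fin d → ℝ => (∑ m, W i m * W j m)^3)
      (((∑ m, W i m * W j m) * (∑ m, W i m * W j m)) • (∑ m, (W i m • L j m + W j m • L i m))
        + (∑ m, W i m * W j m) • ((∑ m, W i m * W j m) • (∑ m, (W i m • L j m + W j m • L i m))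
          + (∑ m, W i m * W j m) • (∑ m, (W i m • L j m + W j m • L i m)))) W := by
    intro i j
    have h3 := ((hS i j).mul (hS i j)).mul (hS i j)
    have hfun : (fun W : Fin d → Fin d → ℝ => (∑ m, W i m * W j m)^3)
        = fun W : Fin d → Fin d → ℝ => ((∑ m, W i m * W j m) * (∑ m, W i m * W j m)) * (∑ m, W i m * W j m) := by
      funext W; ring
    rw [hfun]; exact h3
  have hlin : ∀ i j : Fin d, HasFDerivAt (fun W : Fin d → Fin d → ℝ => (W i j)^3)
      ((W i j * W i j) • L i j + W i j • (W i j • L i j + W i j • L i j)) W := by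
    intro i j
    have h3 := ((hL i j).mul (hL i j)).mul (hL i j)
    have hfun : (fun W : Fin d → Fin d → ℝ => (W i j)^3)
        = fun W : Fin d → Fin d → ℝ => (W i j * W i j) * W i j := by funext W; ring
    rw [hfun]; exact h3
  have hphi := (((HasFDerivAt.fun_sum (fun i (_ : i ∈ Finset.univ) =>
      HasFDerivAt.fun_sum (fun j (_ : j ∈ Finset.univ) => hcube i j))).sub
    ((HasFDerivAt.fun_sum (fun i (_ : i ∈ Finset.univ) =>
      HasFDerivAt.fun_sum (fun j (_ : j ∈ Finset.univ) => hlin i j))).const_mul 2)).add_const (d:ℝ))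
  have hphi2 : HasFDerivAt (phi d) _ W := hphi
  rw [hphi2.fderiv]
  refine ContinuousLinearMap.ext fun H => ?_
  simp only [ContinuousLinearMap.sub_apply, ContinuousLinearMap.add_apply,
    ContinuousLinearMap.smul_apply, ContinuousLinearMap.coe_sum', Finset.sum_apply,
    ContinuousLinearMap.coe_smul', Pi.smul_apply, ContinuousLinearMap.coe_comp',
    Function.comp_apply, ContinuousLinearMap.proj_apply, ContinuousLinearMap.zero_apply,
    smul_eq_mul, ContinuousLinearMap.add_apply, L]
  have hsymm : ∀ i j : Fin d, (∑ m, W i m * W j m) = ∑ m, W j m * W i m :=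
    fun i j => Finset.sum_congr rfl fun m _ => mul_comm _ _
  have key' : ∀ i k : Fin d, ∑ j, (∑ m, W i m * W j m)^2 * W j k = (W i k)^2 := by
    intro i k; rw [hWdef]; exact key d hd t i k
  have step1 : ∀ i j : Fin d,
      ((∑ m, W i m * W j m) * ∑ m, W i m * W j m) *
          ∑ m, (W i m * H j m + W j m * H i m) +
        (∑ m, W i m * W j m) *
          ((∑ m, W i m * W j m) * ∑ m, (W i m * H j m + W j m * H i m) +
            (∑ m, W i m * W j m) * ∑ m, (W i m * H j m + W j m * H i m))
      = (∑ m, 3 * (∑ m', W i m' * W j m')^2 * (W i m * H j m))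
        + ∑ m, 3 * (∑ m', W i m' * W j m')^2 * (W j m * H i m) := by
    intro i j
    rw [← Finset.sum_add_distrib]
    trans 3 * (∑ m, W i m * W j m)^2 * ∑ m, (W i m * H j m + W j m * H i m)
    · ring
    · rw [Finset.mul_sum]
      exact Finset.sum_congr rfl fun m _ => by ring
  have hBsum : ∀ i : Fin d,
      (∑ x1, ∑ m, 3 * (∑ m', W i m' * W x1 m')^2 * (W x1 m * H i m))
        = ∑ m, 3 * H i m * (W i m)^2 := by
    intro i
    rw [Finset.sum_comm]
    refine Finset.sum_congr rfl fun m _ => ?_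
    calc ∑ x1, 3 * (∑ m', W i m' * W x1 m')^2 * (W x1 m * H i m)
        = 3 * H i m * ∑ x1, (∑ m', W i m' * W x1 m')^2 * W x1 m := by
          rw [Finset.mul_sum]; exact Finset.sum_congr rfl fun j _ => by ring
      _ = 3 * H i m * (W i m)^2 := by rw [key' i m]
  have hterm1 :
      (∑ x : Fin d, ∑ x_1 : Fin d,
          (((∑ m : Fin d, W x m * W x_1 m) * ∑ m : Fin d, W x m * W x_1 m) *
              ∑ x_2 : Fin d, (W x x_2 * H x_1 x_2 + W x_1 x_2 * H x x_2) +
            (∑ m : Fin d, W x m * W x_1 m) *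
              ((∑ m : Fin d, W x m * W x_1 m) *
                  ∑ x_2 : Fin d, (W x x_2 * H x_1 x_2 + W x_1 x_2 * H x x_2) +
                (∑ m : Fin d, W x m * W x_1 m) *
                  ∑ x_2 : Fin d, (W x x_2 * H x_1 x_2 + W x_1 x_2 * H x x_2))))
      = 2 * ∑ i : Fin d, ∑ m : Fin d, 3 * H i m * (W i m)^2 := by
    calc (∑ x : Fin d, ∑ x_1 : Fin d,
          (((∑ m : Fin d, W x m * W x_1 m) * ∑ m : Fin d, W x m * W x_1 m) *
              ∑ x_2 : Fin d, (W x x_2 * H x_1 x_2 + W x_1 x_2 * H x x_2) +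
            (∑ m : Fin d, W x m * W x_1 m) *
              ((∑ m : Fin d, W x m * W x_1 m) *
                  ∑ x_2 : Fin d, (W x x_2 * H x_1 x_2 + W x_1 x_2 * H x x_2) +
                (∑ m : Fin d, W x m * W x_1 m) *
                  ∑ x_2 : Fin d, (W x x_2 * H x_1 x_2 + W x_1 x_2 * H x x_2))))
        = ∑ x, ∑ x_1, ((∑ m, 3 * (∑ m', W x m' * W x_1 m')^2 * (W x m * H x_1 m))
            + ∑ m, 3 * (∑ m', W x m' * W x_1 m')^2 * (W x_1 m * H x m)) :=
          Finset.sum_congr rfl fun x _ => Finset.sum_congr rfl fun x1 _ => step1 x x1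
      _ = (∑ x, ∑ x_1, ∑ m, 3 * (∑ m', W x m' * W x_1 m')^2 * (W x m * H x_1 m))
            + ∑ x, ∑ x_1, ∑ m, 3 * (∑ m', W x m' * W x_1 m')^2 * (W x_1 m * H x m) := by
          rw [← Finset.sum_add_distrib]
          exact Finset.sum_congr rfl fun x _ => Finset.sum_add_distrib
      _ = (∑ x, ∑ x_1, ∑ m, 3 * (∑ m', W x m' * W x_1 m')^2 * (W x_1 m * H x m))
            + ∑ x, ∑ x_1, ∑ m, 3 * (∑ m', W x m' * W x_1 m')^2 * (W x_1 m * H x m) := by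
          congr 1
          rw [Finset.sum_comm]
          exact Finset.sum_congr rfl fun x _ => Finset.sum_congr rfl fun x1 _ =>
            Finset.sum_congr rfl fun m _ => by rw [hsymm x1 x]
      _ = 2 * ∑ x, ∑ x_1, ∑ m, 3 * (∑ m', W x m' * W x_1 m')^2 * (W x_1 m * H x m) := by ring
      _ = 2 * ∑ i : Fin d, ∑ m : Fin d, 3 * H i m * (W i m)^2 := by
          rw [Finset.sum_congr rfl fun i (_ : i ∈ Finset.univ) => hBsum i]
  have hterm2 : (∑ x : Fin d, ∑ x_1 : Fin d,
        (W x x_1 * W x x_1 * H x x_1 + W x x_1 * (W x x_1 * H x x_1 + W x x_1 * H x x_1)))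
      = ∑ i : Fin d, ∑ m : Fin d, 3 * H i m * (W i m)^2 :=
    Finset.sum_congr rfl fun i _ => Finset.sum_congr rfl fun j _ => by ring
  linarith [hterm1, hterm2]
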